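/- Let Γ and Σ be finite connected graphs without isolated vertices. Then Γ □ Σ is R-thick if and only if both Γ and Σ are isomorphic to K₂. -/
import Mathlib



def RThick {V : Type*} (G : SimpleGraph V) : Prop :=
  ∃ u v : V, u ≠ v ∧ G.neighborSet u = G.neighborSet v

private lemma walkmem {V : Type*} (G : SimpleGraph V) (a b : V)
    (hNa : ∀ c, G.Adj a c → c = b) (hNb : ∀ c, G.Adj b c → c = a) :
    ∀ {u v : V}, G.Walk u v → (u = a ∨ u = b) → (v = a ∨ v = b) := by
  intro u v p
  induction p with
  | nil => exact id
  | cons h _ ih =>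
    intro hu
    apply ih
    rcases hu with rfl | rfl
    · exact Or.inr (hNa _ h)
    · exact Or.inl (hNb _ h)

private lemma toK2 {V : Type*} (G : SimpleGraph V) (a b : V) (hab : a ≠ b)
    (hadj : G.Adj a b) (hall : ∀ v : V, v = a ∨ v = b) :
    Nonempty (G ≃g (⊤ : SimpleGraph (Fin 2))) := by
  classical
  refine ⟨⟨⟨fun v => if v = a then 0 else 1, fun i => if i = 0 then a else b, ?_, ?_⟩, ?_⟩⟩
  · intro v
    rcases hall v with rfl | rfl <;> simp [hab, hab.symm]
  · intro i
    fin_cases i <;> simp [hab, hab.symm]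
  · intro u v
    simp only [SimpleGraph.top_adj]
    rcases hall u with rfl | rfl <;> rcases hall v with rfl | rfl <;>
      simp [hab, hab.symm, hadj, hadj.symm, G.irrefl]

private lemma adjK2' {V : Type*} (G : SimpleGraph V) (e : G ≃g (⊤ : SimpleGraph (Fin 2))) :
    ∀ c, G.Adj (e.symm 1) c ↔ c = e.symm 0 := by
  intro c
  have h0 : ∀ i : Fin 2, i ≠ 1 ↔ i = 0 := by decide
  constructor
  · intro h
    have h2 : (⊤ : SimpleGraph (Fin 2)).Adj (e (e.symm 1)) (e c) := e.map_adj_iff.mpr h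
    simp only [SimpleGraph.top_adj, RelIso.apply_symm_apply] at h2
    have : e c = 0 := (h0 _).mp (Ne.symm h2)
    rw [← this]; simp
  · rintro rfl
    have : (⊤ : SimpleGraph (Fin 2)).Adj (e (e.symm 1)) (e (e.symm 0)) := by
      simp [SimpleGraph.top_adj]
    exact e.map_adj_iff.mp this

private lemma adjK2 {V : Type*} (G : SimpleGraph V) (e : G ≃g (⊤ : SimpleGraph (Fin 2))) :
    ∀ c, G.Adj (e.symm 0) c ↔ c = e.symm 1 := by
  intro c
  have h0 : ∀ i : Fin 2, i ≠ 0 ↔ i = 1 := by decide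
  constructor
  · intro h
    have h2 : (⊤ : SimpleGraph (Fin 2)).Adj (e (e.symm 0)) (e c) := e.map_adj_iff.mpr h
    simp only [SimpleGraph.top_adj, RelIso.apply_symm_apply] at h2
    have : e c = 1 := (h0 _).mp (Ne.symm h2)
    rw [← this]; simp
  · rintro rfl
    have : (⊤ : SimpleGraph (Fin 2)).Adj (e (e.symm 0)) (e (e.symm 1)) := by
      simp [SimpleGraph.top_adj]
    exact e.map_adj_iff.mp this

theorem stmt4 {V W : Type*} [Fintype V] [Fintype W]
    (G : SimpleGraph V) (H : SimpleGraph W)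
    (hGc : G.Connected) (hHc : H.Connected)
    (hG : ∀ v : V, ∃ u, G.Adj v u) (hH : ∀ x : W, ∃ y, H.Adj x y) :
    RThick (G □ H) ↔
      (Nonempty (G ≃g (⊤ : SimpleGraph (Fin 2))) ∧
        Nonempty (H ≃g (⊤ : SimpleGraph (Fin 2)))) := by
  constructor
  · rintro ⟨⟨a, x⟩, ⟨b, y⟩, hne, hN⟩
    have key : ∀ c z, ((G.Adj a c ∧ x = z) ∨ (H.Adj x z ∧ a = c)) ↔
        ((G.Adj b c ∧ y = z) ∨ (H.Adj y z ∧ b = c)) := by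
      intro c z
      have := Set.ext_iff.mp hN (c, z)
      simpa [SimpleGraph.mem_neighborSet, SimpleGraph.boxProd_adj] using this
    -- a ≠ b
    have hab : a ≠ b := by
      rintro rfl
      obtain ⟨c, hc⟩ := hG a
      have := (key c x).mp (Or.inl ⟨hc, rfl⟩)
      rcases this with ⟨_, hyx⟩ | ⟨_, hac⟩
      · exact hne (by rw [hyx])
      · exact (G.ne_of_adj hc) hac
    have hxy : x ≠ y := by
      rintro rfl
      obtain ⟨z, hz⟩ := hH x
      have := (key a z).mp (Or.inr ⟨hz, rfl⟩)
      rcases this with ⟨hba, hxz⟩ | ⟨_, hba⟩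
      · exact (H.ne_of_adj hz) hxz
      · exact hab hba.symm
    -- neighbors of a are exactly b, etc.
    have hNa : ∀ c, G.Adj a c → c = b := by
      intro c hc
      rcases (key c x).mp (Or.inl ⟨hc, rfl⟩) with ⟨_, hyx⟩ | ⟨_, hbc⟩
      · exact absurd hyx.symm hxy
      · exact hbc.symm
    have hNb : ∀ c, G.Adj b c → c = a := by
      intro c hc
      rcases (key c y).mpr (Or.inl ⟨hc, rfl⟩) with ⟨_, hxy'⟩ | ⟨_, hac⟩
      · exact absurd hxy' hxy
      · exact hac.symm
    have hNx : ∀ z, H.Adj x z → z = y := by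
      intro z hz
      rcases (key a z).mp (Or.inr ⟨hz, rfl⟩) with ⟨_, hyz⟩ | ⟨_, hba⟩
      · exact hyz.symm
      · exact absurd hba.symm hab
    have hNy : ∀ z, H.Adj y z → z = x := by
      intro z hz
      rcases (key b z).mpr (Or.inr ⟨hz, rfl⟩) with ⟨_, hxz⟩ | ⟨_, hab'⟩
      · exact hxz.symm
      · exact absurd hab' hab
    obtain ⟨c, hc⟩ := hG a
    have hadjab : G.Adj a b := (hNa c hc) ▸ hc
    obtain ⟨z, hz⟩ := hH x
    have hadjxy : H.Adj x y := (hNx z hz) ▸ hz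
    have hallV : ∀ v : V, v = a ∨ v = b := fun v =>
      walkmem G a b hNa hNb ((hGc a v).some) (Or.inl rfl)
    have hallW : ∀ w : W, w = x ∨ w = y := fun w =>
      walkmem H x y hNx hNy ((hHc x w).some) (Or.inl rfl)
    exact ⟨toK2 G a b hab hadjab hallV, toK2 H x y hxy hadjxy hallW⟩
  · rintro ⟨⟨e⟩, ⟨f⟩⟩
    set a := e.symm 0 with ha
    set b := e.symm 1 with hb
    set x := f.symm 0 with hx
    set y := f.symm 1 with hy
    have hab : a ≠ b := fun h => by
      have := e.symm.injective h; simp at this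
    have hxy : x ≠ y := fun h => by
      have := f.symm.injective h; simp at this
    have hGa := adjK2 G e
    have hHx := adjK2 H f
    have hGb := adjK2' G e
    have hHy := adjK2' H f
    refine ⟨(a, x), (b, y), fun h => hab (congrArg Prod.fst h), ?_⟩
    ext ⟨c, z⟩
    simp only [SimpleGraph.mem_neighborSet, SimpleGraph.boxProd_adj]
    rw [hGa c, hGb c, hHx z, hHy z]
    constructor <;> rintro (⟨h1, h2⟩ | ⟨h1, h2⟩) <;> subst_vars <;> tauto
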